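/- Let x ∈ ℂ with x ≠ 0, and suppose x is neither an eigenvalue of Q₁ nor an eigenvalue of Q̂₁, and let w ∈ ℂ satisfy w² = x. Then the 2N×2N matrix Ĥ(x) − x·I_{2N} with Ĥ(x) = [[0, w·Ŷ],[w·Ŷᴴ, 0]] is invertible, the (r+s)×(r+s) matrix 𝒟⁻¹ + x·𝐔ᴴ·G(x)·𝐔 is invertible, and, writing Ĝ(x) = (Ĥ(x) − x·I_{2N})⁻¹, one has 𝐔ᴴ·Ĝ(x)·𝐔 = x⁻¹·(I − 𝒟)^{1/2}·[𝒟⁻¹ − 𝒟⁻¹·(𝒟⁻¹ + x·𝐔ᴴ·G(x)·𝐔)⁻¹·𝒟⁻¹]·(I − 𝒟)^{1/2}, where (I − 𝒟)^{1/2} is the diagonal matrix with entries (1+d_i^a)^{−1/2} for i = 1,…,r followed by (1+d_j^b)^{−1/2} for j = 1,…,s. -/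

import Mathlib

open Matrix

noncomputable section

/-- Spiked diagonal entries: `â_k = a_k (1 + d_k)` for `k < r` (0-indexed) and
`â_k = a_k` otherwise. -/
def hatEntries (N r : ℕ) (a d : Fin N → ℝ) : Fin N → ℝ :=
  fun k => if (k : ℕ) < r then a k * (1 + d k) else a k

/-- The diagonal matrix `A^{1/2}` with entries `√(a_i)`. -/
def sqrtDiag (N : ℕ) (a : Fin N → ℝ) : Matrix (Fin N) (Fin N) ℂ :=
  Matrix.diagonal fun i => ((Real.sqrt (a i) : ℝ) : ℂ)

/-- `Y = A^{1/2} U B^{1/2}`. -/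
def Ymat (N : ℕ) (a b : Fin N → ℝ) (U : Matrix (Fin N) (Fin N) ℂ) :
    Matrix (Fin N) (Fin N) ℂ :=
  sqrtDiag N a * U * sqrtDiag N b

/-- The linearization `H(x) = [[0, w·Y],[w·Yᴴ, 0]]`, where `w² = x`. -/
def Hlin (N : ℕ) (Y : Matrix (Fin N) (Fin N) ℂ) (w : ℂ) :
    Matrix (Fin N ⊕ Fin N) (Fin N ⊕ Fin N) ℂ :=
  Matrix.fromBlocks 0 (w • Y) (w • Yᴴ) 0

/-- The `2N × (r+s)` matrix `𝐔` whose columns are `e₁,…,e_r` and `e_{N+1},…,e_{N+s}`. -/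
def Umat (N r s : ℕ) : Matrix (Fin N ⊕ Fin N) (Fin r ⊕ Fin s) ℂ :=
  Matrix.fromBlocks (fun i i' => if (i : ℕ) = (i' : ℕ) then 1 else 0) 0 0
    (fun j j' => if (j : ℕ) = (j' : ℕ) then 1 else 0)

/-- The `(r+s) × (r+s)` diagonal matrix `𝒟` with entries `d_i^a/(1+d_i^a)` and
`d_j^b/(1+d_j^b)`. -/
def Dmat (N r s : ℕ) (hr : r ≤ N) (hs : s ≤ N) (da db : Fin N → ℝ) :
    Matrix (Fin r ⊕ Fin s) (Fin r ⊕ Fin s) ℂ :=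
  Matrix.diagonal (Sum.elim
    (fun i : Fin r =>
      ((da (Fin.castLE hr i) / (1 + da (Fin.castLE hr i)) : ℝ) : ℂ))
    (fun j : Fin s =>
      ((db (Fin.castLE hs j) / (1 + db (Fin.castLE hs j)) : ℝ) : ℂ)))

/-- The `2N × 2N` diagonal matrix `P` with entries `(1+d_i^a)^{1/2}` (`i < r`), `1`
(`r ≤ i < N`), `(1+d_j^b)^{1/2}` (`j < s`), `1` (`s ≤ j < N`). -/
def Pmat (N r s : ℕ) (da db : Fin N → ℝ) :
    Matrix (Fin N ⊕ Fin N) (Fin N ⊕ Fin N) ℂ :=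
  Matrix.diagonal (Sum.elim
    (fun i : Fin N =>
      ((Real.sqrt (1 + if (i : ℕ) < r then da i else 0) : ℝ) : ℂ))
    (fun j : Fin N =>
      ((Real.sqrt (1 + if (j : ℕ) < s then db j else 0) : ℝ) : ℂ)))

/-- The `(r+s) × (r+s)` diagonal matrix `(I − 𝒟)^{1/2}` with entries `(1+d_i^a)^{-1/2}`
and `(1+d_j^b)^{-1/2}`. -/
def Emat (N r s : ℕ) (hr : r ≤ N) (hs : s ≤ N) (da db : Fin N → ℝ) :
    Matrix (Fin r ⊕ Fin s) (Fin r ⊕ Fin s) ℂ :=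
  Matrix.diagonal (Sum.elim
    (fun i : Fin r => (((Real.sqrt (1 + da (Fin.castLE hr i)))⁻¹ : ℝ) : ℂ))
    (fun j : Fin s => (((Real.sqrt (1 + db (Fin.castLE hs j)))⁻¹ : ℝ) : ℂ)))


/-! ### Auxiliary lemmas -/

lemma matrix_isUnit_of_mul_eq_one {n : Type*} [Fintype n] [DecidableEq n]
    {A B : Matrix n n ℂ} (h : A * B = 1) : IsUnit A :=
  ⟨⟨A, B, h, mul_eq_one_comm.mp h⟩, rfl⟩

lemma hlin_isUnit (N : ℕ) (Y : Matrix (Fin N) (Fin N) ℂ) (x w : ℂ) (hx : x ≠ 0)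
    (hw : w ^ 2 = x)
    (hev : ∀ v : Fin N → ℂ, (Y * Yᴴ) *ᵥ v = x • v → v = 0) :
    IsUnit (Hlin N Y w - x • (1 : Matrix (Fin N ⊕ Fin N) (Fin N ⊕ Fin N) ℂ)) := by
  have hw0 : w ≠ 0 := by
    intro h; apply hx; rw [← hw, h]; ring
  have hww : w * w = x := by rw [← hw]; ring
  rw [Matrix.isUnit_iff_isUnit_det, isUnit_iff_ne_zero]
  intro hdet
  obtain ⟨v, hv0, hker⟩ := Matrix.exists_mulVec_eq_zero_iff.mpr hdet
  set u : Fin N → ℂ := v ∘ Sum.inl with hu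
  set t : Fin N → ℂ := v ∘ Sum.inr with ht
  have hblock : Hlin N Y w - x • (1 : Matrix (Fin N ⊕ Fin N) (Fin N ⊕ Fin N) ℂ)
      = fromBlocks (-(x • 1)) (w • Y) (w • Yᴴ) (-(x • 1)) := by
    rw [Hlin, ← fromBlocks_one]
    ext i j
    cases i <;> cases j <;> simp [fromBlocks]
  have hv : v = Sum.elim u t := by funext k; cases k <;> rfl
  rw [hblock, hv, fromBlocks_mulVec] at hker
  simp only [Sum.elim_comp_inl, Sum.elim_comp_inr] at hker
  have h1 : -(x • 1) *ᵥ u + (w • Y) *ᵥ t = 0 := by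
    funext i; exact congrFun hker (Sum.inl i)
  have h2 : (w • Yᴴ) *ᵥ u + -(x • 1) *ᵥ t = 0 := by
    funext i; exact congrFun hker (Sum.inr i)
  rw [Matrix.neg_mulVec, Matrix.smul_mulVec, Matrix.smul_mulVec,
    Matrix.one_mulVec] at h1 h2
  have hYt : w • (Y *ᵥ t) = x • u := by
    have := neg_add_eq_zero.mp h1
    linear_combination (norm := module) -this
  have hYu : w • (Yᴴ *ᵥ u) = x • t := by
    linear_combination (norm := module) h2
  have hc : w⁻¹ * x * w⁻¹ * x = x := by
    have h' : w⁻¹ * x * w⁻¹ * x = x * x * (w * w)⁻¹ := by ring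
    rw [h', hww, mul_inv_cancel_right₀ hx]
  have hQ : (Y * Yᴴ) *ᵥ u = x • u := by
    have e1 : Yᴴ *ᵥ u = w⁻¹ • (x • t) := by
      rw [← hYu, smul_smul, inv_mul_cancel₀ hw0, one_smul]
    have e2 : Y *ᵥ t = w⁻¹ • (x • u) := by
      rw [← hYt, smul_smul, inv_mul_cancel₀ hw0, one_smul]
    rw [← Matrix.mulVec_mulVec, e1, Matrix.mulVec_smul, Matrix.mulVec_smul, e2]
    rw [smul_smul, smul_smul, smul_smul, hc]
  have hu0 : u = 0 := hev u hQ
  have ht0 : t = 0 := by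
    have : x • t = 0 := by rw [← hYu, hu0, Matrix.mulVec_zero, smul_zero]
    simpa [hx] using smul_eq_zero.mp this
  apply hv0
  rw [hv, hu0, ht0]
  funext k; cases k <;> simp

lemma Umat_ll (N r s : ℕ) (i : Fin N) (j : Fin r) :
    Umat N r s (Sum.inl i) (Sum.inl j) = if (i : ℕ) = (j : ℕ) then 1 else 0 := rfl

lemma Umat_lr (N r s : ℕ) (i : Fin N) (j : Fin s) :
    Umat N r s (Sum.inl i) (Sum.inr j) = 0 := rfl

lemma Umat_rl (N r s : ℕ) (i : Fin N) (j : Fin r) :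
    Umat N r s (Sum.inr i) (Sum.inl j) = 0 := rfl

lemma Umat_rr (N r s : ℕ) (i : Fin N) (j : Fin s) :
    Umat N r s (Sum.inr i) (Sum.inr j) = if (i : ℕ) = (j : ℕ) then 1 else 0 := rfl

lemma indicator_sum {r N : ℕ} (i j : Fin N) (c : Fin r → ℂ) :
    ∑ k : Fin r, (if (i:ℕ) = (k:ℕ) then (1:ℂ) else 0) * c k *
      (if (j:ℕ) = (k:ℕ) then (1:ℂ) else 0) =
    if i = j then (if h : (i:ℕ) < r then c ⟨(i:ℕ), h⟩ else 0) else 0 := by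
  by_cases h : (i:ℕ) < r
  · rw [Finset.sum_eq_single (⟨(i:ℕ), h⟩ : Fin r)]
    · by_cases hij : i = j
      · subst hij; simp [h]
      · have : ¬ ((j:ℕ) = (i:ℕ)) := fun hh => hij (Fin.ext hh.symm)
        simp [hij, this, h]
    · intro k _ hk
      have : ¬ ((i:ℕ) = (k:ℕ)) := by
        intro hh
        exact hk (by apply Fin.ext; simp [← hh])
      simp [this]
    · simp
  · rw [Finset.sum_eq_zero]
    · simp [h]
    · intro k _
      have : ¬ ((i:ℕ) = (k:ℕ)) := fun hh => h (hh ▸ k.isLt)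
      simp [this]

def gfun (N r s : ℕ) (da db : Fin N → ℝ) : Fin N ⊕ Fin N → ℂ :=
  Sum.elim (fun i => if _ : (i:ℕ) < r then ((da i / (1 + da i) : ℝ) : ℂ) else 0)
    (fun j => if _ : (j:ℕ) < s then ((db j / (1 + db j) : ℝ) : ℂ) else 0)

lemma UDU (N r s : ℕ) (hr : r ≤ N) (hs : s ≤ N) (da db : Fin N → ℝ) :
    Umat N r s * Dmat N r s hr hs da db * (Umat N r s)ᴴ
      = diagonal (gfun N r s da db) := by
  ext i j
  rw [Matrix.mul_apply]
  simp only [conjTranspose_apply, Dmat, mul_diagonal]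
  cases i with
  | inl i =>
    cases j with
    | inl j =>
      rw [Fintype.sum_sum_type]
      simp only [Umat_ll, Umat_lr, Umat_rl, Umat_rr, Sum.elim_inl, Sum.elim_inr,
        star_zero, mul_zero, zero_mul, Matrix.zero_apply, Finset.sum_const_zero, add_zero,
        apply_ite (star : ℂ → ℂ), star_one]
      rw [indicator_sum i j]
      simp only [diagonal_apply, gfun, Sum.elim_inl, Sum.inl.injEq]
      by_cases hij : i = j
      · subst hij
        by_cases h : (i:ℕ) < r <;> simp [h, Fin.castLE]
      · simp [hij]
    | inr j =>
      rw [Fintype.sum_sum_type]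
      simp [Umat_ll, Umat_lr, Umat_rl, Umat_rr]
  | inr i =>
    cases j with
    | inl j =>
      rw [Fintype.sum_sum_type]
      simp [Umat_ll, Umat_lr, Umat_rl, Umat_rr]
    | inr j =>
      rw [Fintype.sum_sum_type]
      simp only [Umat_ll, Umat_lr, Umat_rl, Umat_rr, Sum.elim_inl, Sum.elim_inr,
        star_zero, mul_zero, zero_mul, Matrix.zero_apply, Finset.sum_const_zero, zero_add,
        apply_ite (star : ℂ → ℂ), star_one]
      rw [indicator_sum i j]
      simp only [diagonal_apply, gfun, Sum.elim_inr, Sum.inr.injEq]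
      by_cases hij : i = j
      · subst hij
        by_cases h : (i:ℕ) < s <;> simp [h, Fin.castLE]
      · simp [hij]

lemma Ymat_apply (N : ℕ) (a b : Fin N → ℝ) (U : Matrix (Fin N) (Fin N) ℂ)
    (i j : Fin N) :
    Ymat N a b U i j = ((Real.sqrt (a i) : ℝ):ℂ) * U i j * ((Real.sqrt (b j) : ℝ):ℂ) := by
  simp [Ymat, sqrtDiag, mul_diagonal, diagonal_mul]

lemma sqrt_hat (N r : ℕ) (a d : Fin N → ℝ) (i : Fin N) (ha : 0 ≤ a i) :
    Real.sqrt (hatEntries N r a d i)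
      = Real.sqrt (1 + if (i:ℕ) < r then d i else 0) * Real.sqrt (a i) := by
  unfold hatEntries
  by_cases h : (i:ℕ) < r
  · simp only [h, if_true]
    rw [Real.sqrt_mul ha, mul_comm]
  · simp [h]

lemma scalar_diag (t : ℝ) (ht : 0 ≤ t) (x : ℂ) :
    ((Real.sqrt (1+t) : ℝ) : ℂ) * (0 - x * 1 + x * ((t/(1+t) : ℝ) : ℂ)) *
      ((Real.sqrt (1+t) : ℝ) : ℂ) = 0 - x * 1 := by
  have h0 : (0:ℝ) < 1 + t := by linarith
  have h1 : ((Real.sqrt (1+t) : ℝ):ℂ) * ((Real.sqrt (1+t):ℝ):ℂ) = 1 + (t:ℂ) := by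
    rw [← Complex.ofReal_mul, Real.mul_self_sqrt h0.le]; push_cast; ring
  have h2 : (1:ℂ) + (t:ℂ) ≠ 0 := by
    have : ((1+t:ℝ):ℂ) ≠ 0 := by exact_mod_cast h0.ne'
    push_cast at this; exact this
  have h3 : ((t/(1+t) : ℝ):ℂ) = (t:ℂ) / (1 + (t:ℂ)) := by push_cast; ring
  rw [h3, show ((Real.sqrt (1+t) : ℝ):ℂ) * (0 - x * 1 + x * ((t:ℂ)/(1+(t:ℂ)))) *
      ((Real.sqrt (1+t) : ℝ):ℂ) = (((Real.sqrt (1+t) : ℝ):ℂ) * ((Real.sqrt (1+t) : ℝ):ℂ)) *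
      (0 - x * 1 + x * ((t:ℂ)/(1+(t:ℂ)))) from by ring, h1]
  field_simp
  ring

lemma structural (N r s : ℕ) (hr : r ≤ N) (hs : s ≤ N) (a b da db : Fin N → ℝ)
    (ha : ∀ i, 0 ≤ a i) (hb : ∀ i, 0 ≤ b i)
    (hda : ∀ i : Fin N, (i:ℕ) < r → 0 ≤ da i) (hdb : ∀ j : Fin N, (j:ℕ) < s → 0 ≤ db j)
    (U : Matrix (Fin N) (Fin N) ℂ) (x w : ℂ) :
    Hlin N (Ymat N (hatEntries N r a da) (hatEntries N s b db) U) w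
        - x • (1 : Matrix (Fin N ⊕ Fin N) (Fin N ⊕ Fin N) ℂ) =
      Pmat N r s da db * ((Hlin N (Ymat N a b U) w - x • 1) +
        x • (Umat N r s * Dmat N r s hr hs da db * (Umat N r s)ᴴ)) * Pmat N r s da db := by
  rw [UDU]
  ext i j
  simp only [Pmat, mul_diagonal, diagonal_mul, Matrix.sub_apply, Matrix.add_apply,
    Matrix.smul_apply, Matrix.one_apply, diagonal_apply, smul_eq_mul, Hlin, gfun]
  cases i with
  | inl i =>
    cases j with
    | inl j =>
      simp only [fromBlocks_apply₁₁, Sum.elim_inl, Sum.inl.injEq, Matrix.zero_apply]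
      by_cases hij : i = j
      · subst hij
        simp only [if_true]
        by_cases h : (i:ℕ) < r
        · simp only [h, dif_pos, if_true]
          exact (scalar_diag (da i) (hda i h) x).symm
        · simp only [h, dif_neg, if_false, not_false_iff]
          norm_num
      · simp [hij]
    | inr j =>
      simp only [fromBlocks_apply₁₂, Sum.elim_inl, Sum.elim_inr, Matrix.smul_apply,
        smul_eq_mul, reduceCtorEq, if_false, mul_zero, sub_zero, add_zero]
      rw [Ymat_apply, Ymat_apply, sqrt_hat N r a da i (ha i), sqrt_hat N s b db j (hb j)]
      push_cast
      ring
  | inr i =>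
    cases j with
    | inl j =>
      simp only [fromBlocks_apply₂₁, Sum.elim_inl, Sum.elim_inr, Matrix.smul_apply,
        smul_eq_mul, reduceCtorEq, if_false, mul_zero, sub_zero, add_zero,
        conjTranspose_apply]
      rw [Ymat_apply, Ymat_apply, sqrt_hat N r a da j (ha j), sqrt_hat N s b db i (hb i)]
      push_cast
      simp only [star_mul', Complex.star_def, Complex.conj_ofReal]
      ring
    | inr j =>
      simp only [fromBlocks_apply₂₂, Sum.elim_inr, Sum.inr.injEq, Matrix.zero_apply]
      by_cases hij : i = j
      · subst hij
        simp only [if_true]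
        by_cases h : (i:ℕ) < s
        · simp only [h, dif_pos, if_true]
          exact (scalar_diag (db i) (hdb i h) x).symm
        · simp only [h, dif_neg, if_false, not_false_iff]
          norm_num
      · simp [hij]

lemma key_inv {n m : Type*} [Fintype n] [Fintype m] [DecidableEq n] [DecidableEq m]
    (M Nn : Matrix n n ℂ) (Uu : Matrix n m ℂ) (D : Matrix m m ℂ) (x : ℂ)
    (hM : IsUnit M) (hNn : IsUnit Nn) (hD : IsUnit D)
    (hNdef : Nn = M + x • (Uu * D * Uuᴴ)) :
    (D⁻¹ + x • (Uuᴴ * M⁻¹ * Uu)) * (D - x • (D * (Uuᴴ * Nn⁻¹ * Uu) * D)) = 1 := by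
  have hDD : D⁻¹ * D = 1 := Matrix.nonsing_inv_mul _ ((Matrix.isUnit_iff_isUnit_det D).mp hD)
  have hGM : M⁻¹ * M = 1 := Matrix.nonsing_inv_mul _ ((Matrix.isUnit_iff_isUnit_det M).mp hM)
  have hNN : Nn * Nn⁻¹ = 1 := Matrix.mul_nonsing_inv _ ((Matrix.isUnit_iff_isUnit_det Nn).mp hNn)
  have hsub : x • (Uu * D * Uuᴴ) = Nn - M := by rw [hNdef]; abel
  have key : (x*x) • ((Uuᴴ * M⁻¹ * Uu) * (D * (Uuᴴ * Nn⁻¹ * Uu) * D))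
      = x • ((Uuᴴ * M⁻¹ * Uu) * D) - x • ((Uuᴴ * Nn⁻¹ * Uu) * D) := by
    have hplain : (Uuᴴ * M⁻¹ * Uu) * (D * (Uuᴴ * Nn⁻¹ * Uu) * D)
        = Uuᴴ * M⁻¹ * ((Uu * D * Uuᴴ) * (Nn⁻¹ * (Uu * D))) := by
      simp only [Matrix.mul_assoc]
    have h2 : x • (Uuᴴ * M⁻¹ * ((x • (Uu * D * Uuᴴ)) * (Nn⁻¹ * (Uu * D))))
        = (x*x) • (Uuᴴ * M⁻¹ * ((Uu * D * Uuᴴ) * (Nn⁻¹ * (Uu * D)))) := by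
      rw [Matrix.smul_mul, Matrix.mul_smul, smul_smul]
    rw [hplain, ← h2, hsub]
    have h3 : (Nn - M) * (Nn⁻¹ * (Uu * D)) = Uu * D - M * (Nn⁻¹ * (Uu * D)) := by
      rw [Matrix.sub_mul, ← Matrix.mul_assoc Nn Nn⁻¹ (Uu * D), hNN, Matrix.one_mul]
    rw [h3, Matrix.mul_sub, smul_sub]
    congr 1
    · simp only [Matrix.mul_assoc]
    · rw [show Uuᴴ * M⁻¹ * (M * (Nn⁻¹ * (Uu * D))) = Uuᴴ * (M⁻¹ * M) * (Nn⁻¹ * (Uu * D)) from by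
        simp only [Matrix.mul_assoc], hGM, Matrix.mul_one]
      simp only [Matrix.mul_assoc]
  calc (D⁻¹ + x • (Uuᴴ * M⁻¹ * Uu)) * (D - x • (D * (Uuᴴ * Nn⁻¹ * Uu) * D))
      = D⁻¹ * D - x • (D⁻¹ * (D * (Uuᴴ * Nn⁻¹ * Uu) * D))
        + (x • ((Uuᴴ * M⁻¹ * Uu) * D)
          - (x*x) • ((Uuᴴ * M⁻¹ * Uu) * (D * (Uuᴴ * Nn⁻¹ * Uu) * D))) := by
        simp only [Matrix.add_mul, Matrix.mul_sub, Matrix.smul_mul, Matrix.mul_smul, smul_smul,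
          smul_add, smul_sub]
        abel
    _ = 1 - x • ((Uuᴴ * Nn⁻¹ * Uu) * D)
        + (x • ((Uuᴴ * M⁻¹ * Uu) * D)
          - (x • ((Uuᴴ * M⁻¹ * Uu) * D) - x • ((Uuᴴ * Nn⁻¹ * Uu) * D))) := by
        rw [hDD, key, Matrix.mul_assoc D (Uuᴴ * Nn⁻¹ * Uu) D,
          ← Matrix.mul_assoc D⁻¹ D ((Uuᴴ * Nn⁻¹ * Uu) * D), hDD, Matrix.one_mul]
    _ = 1 := by abel

def pinvFun (N r s : ℕ) (da db : Fin N → ℝ) : Fin N ⊕ Fin N → ℂ :=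
  Sum.elim
    (fun i : Fin N => (((Real.sqrt (1 + if (i:ℕ) < r then da i else 0))⁻¹ : ℝ) : ℂ))
    (fun j : Fin N => (((Real.sqrt (1 + if (j:ℕ) < s then db j else 0))⁻¹ : ℝ) : ℂ))

lemma sqrtc (t : ℝ) (ht : 0 ≤ t) :
    ((Real.sqrt (1+t) : ℝ) : ℂ) * (((Real.sqrt (1+t))⁻¹ : ℝ) : ℂ) = 1 := by
  rw [← Complex.ofReal_mul, mul_inv_cancel₀ (Real.sqrt_ne_zero'.mpr (by linarith))]
  simp

lemma pmat_mul_pinv (N r s : ℕ) (da db : Fin N → ℝ)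
    (hda : ∀ i : Fin N, (i:ℕ) < r → 0 ≤ da i)
    (hdb : ∀ j : Fin N, (j:ℕ) < s → 0 ≤ db j) :
    Pmat N r s da db * diagonal (pinvFun N r s da db) = 1 := by
  rw [Pmat, diagonal_mul_diagonal]
  rw [show (fun k => (Sum.elim
      (fun i : Fin N => ((Real.sqrt (1 + if (i : ℕ) < r then da i else 0) : ℝ) : ℂ))
      (fun j : Fin N => ((Real.sqrt (1 + if (j : ℕ) < s then db j else 0) : ℝ) : ℂ))) k
        * pinvFun N r s da db k) = fun _ => (1:ℂ) from ?_, diagonal_one]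
  funext k
  cases k with
  | inl i =>
    simp only [Sum.elim_inl, pinvFun]
    by_cases h : (i:ℕ) < r
    · simp only [h, if_true]; exact sqrtc (da i) (hda i h)
    · simp only [h, if_false]; exact sqrtc 0 le_rfl
  | inr j =>
    simp only [Sum.elim_inr, pinvFun]
    by_cases h : (j:ℕ) < s
    · simp only [h, if_true]; exact sqrtc (db j) (hdb j h)
    · simp only [h, if_false]; exact sqrtc 0 le_rfl

lemma pmat_isUnit (N r s : ℕ) (da db : Fin N → ℝ)
    (hda : ∀ i : Fin N, (i:ℕ) < r → 0 ≤ da i)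
    (hdb : ∀ j : Fin N, (j:ℕ) < s → 0 ≤ db j) :
    IsUnit (Pmat N r s da db) :=
  matrix_isUnit_of_mul_eq_one (pmat_mul_pinv N r s da db hda hdb)

lemma pinv_diag (N r s : ℕ) (da db : Fin N → ℝ)
    (hda : ∀ i : Fin N, (i:ℕ) < r → 0 ≤ da i)
    (hdb : ∀ j : Fin N, (j:ℕ) < s → 0 ≤ db j) :
    (Pmat N r s da db)⁻¹ = diagonal (pinvFun N r s da db) :=
  Matrix.inv_eq_right_inv (pmat_mul_pinv N r s da db hda hdb)

lemma pinv_mul_U (N r s : ℕ) (hr : r ≤ N) (hs : s ≤ N) (da db : Fin N → ℝ)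
    (hda : ∀ i : Fin N, (i:ℕ) < r → 0 ≤ da i)
    (hdb : ∀ j : Fin N, (j:ℕ) < s → 0 ≤ db j) :
    (Pmat N r s da db)⁻¹ * Umat N r s = Umat N r s * Emat N r s hr hs da db := by
  rw [pinv_diag N r s da db hda hdb]
  ext i j
  simp only [diagonal_mul, Emat, mul_diagonal, pinvFun]
  cases i with
  | inl i =>
    cases j with
    | inl j =>
      simp only [Umat_ll, Sum.elim_inl]
      by_cases h : (i:ℕ) = (j:ℕ)
      · have hir : (i:ℕ) < r := h ▸ j.isLt
        have hcast : Fin.castLE hr j = i := Fin.ext (by simp [h])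
        simp [h, hir, hcast]
      · simp [h]
    | inr j => simp [Umat_ll, Umat_lr, Umat_rl, Umat_rr]
  | inr i =>
    cases j with
    | inl j => simp [Umat_ll, Umat_lr, Umat_rl, Umat_rr]
    | inr j =>
      simp only [Umat_rr, Sum.elim_inr]
      by_cases h : (i:ℕ) = (j:ℕ)
      · have his : (i:ℕ) < s := h ▸ j.isLt
        have hcast : Fin.castLE hs j = i := Fin.ext (by simp [h])
        simp [h, his, hcast]
      · simp [h]

lemma emat_herm (N r s : ℕ) (hr : r ≤ N) (hs : s ≤ N) (da db : Fin N → ℝ) :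
    (Emat N r s hr hs da db)ᴴ = Emat N r s hr hs da db := by
  have hv : star (Sum.elim
      (fun i : Fin r => (((Real.sqrt (1 + da (Fin.castLE hr i)))⁻¹ : ℝ) : ℂ))
      (fun j : Fin s => (((Real.sqrt (1 + db (Fin.castLE hs j)))⁻¹ : ℝ) : ℂ)))
      = (Sum.elim
      (fun i : Fin r => (((Real.sqrt (1 + da (Fin.castLE hr i)))⁻¹ : ℝ) : ℂ))
      (fun j : Fin s => (((Real.sqrt (1 + db (Fin.castLE hs j)))⁻¹ : ℝ) : ℂ))) := by
    funext k; cases k <;> simp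
  rw [Emat, diagonal_conjTranspose, hv]

lemma pinv_herm (N r s : ℕ) (da db : Fin N → ℝ)
    (hda : ∀ i : Fin N, (i:ℕ) < r → 0 ≤ da i)
    (hdb : ∀ j : Fin N, (j:ℕ) < s → 0 ≤ db j) :
    ((Pmat N r s da db)⁻¹)ᴴ = (Pmat N r s da db)⁻¹ := by
  rw [pinv_diag N r s da db hda hdb, diagonal_conjTranspose]
  have hv : star (pinvFun N r s da db) = pinvFun N r s da db := by
    funext k; cases k <;> simp [pinvFun]
  rw [hv]

lemma uH_mul_pinv (N r s : ℕ) (hr : r ≤ N) (hs : s ≤ N) (da db : Fin N → ℝ)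
    (hda : ∀ i : Fin N, (i:ℕ) < r → 0 ≤ da i)
    (hdb : ∀ j : Fin N, (j:ℕ) < s → 0 ≤ db j) :
    (Umat N r s)ᴴ * (Pmat N r s da db)⁻¹
      = Emat N r s hr hs da db * (Umat N r s)ᴴ := by
  have h := congrArg conjTranspose (pinv_mul_U N r s hr hs da db hda hdb)
  rw [conjTranspose_mul, conjTranspose_mul, pinv_herm N r s da db hda hdb, emat_herm] at h
  exact h

/-- If `x ≠ 0` is neither an eigenvalue of `Q₁` nor of `Q̂₁` and
`w² = x`, then `Ĥ(x) − x·I` and `𝒟⁻¹ + x·𝐔ᴴ·G(x)·𝐔` are invertible and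
`𝐔ᴴ·Ĝ(x)·𝐔 = x⁻¹·(I−𝒟)^{1/2}·[𝒟⁻¹ − 𝒟⁻¹·(𝒟⁻¹ + x·𝐔ᴴ·G(x)·𝐔)⁻¹·𝒟⁻¹]·(I−𝒟)^{1/2}`. -/
theorem spiked_resolvent_identity (N r s : ℕ)
    (hN : 0 < N) (hrpos : 0 < r) (hspos : 0 < s) (hr : r ≤ N) (hs : s ≤ N)
    (a b da db : Fin N → ℝ)
    (ha : ∀ i, 0 < a i) (hb : ∀ i, 0 < b i)
    (hda : ∀ i : Fin N, (i : ℕ) < r → 0 < da i)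
    (hdb : ∀ j : Fin N, (j : ℕ) < s → 0 < db j)
    (U : Matrix (Fin N) (Fin N) ℂ) (hU : U ∈ Matrix.unitaryGroup (Fin N) ℂ)
    (x w : ℂ) (hx : x ≠ 0) (hw : w ^ 2 = x)
    (hev : ∀ v : Fin N → ℂ,
      (Ymat N a b U * (Ymat N a b U)ᴴ) *ᵥ v = x • v → v = 0)
    (hev' : ∀ v : Fin N → ℂ,
      (Ymat N (hatEntries N r a da) (hatEntries N s b db) U *
        (Ymat N (hatEntries N r a da) (hatEntries N s b db) U)ᴴ) *ᵥ v = x • v → v = 0) :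
    IsUnit (Hlin N (Ymat N (hatEntries N r a da) (hatEntries N s b db) U) w -
        x • (1 : Matrix (Fin N ⊕ Fin N) (Fin N ⊕ Fin N) ℂ)) ∧
    IsUnit ((Dmat N r s hr hs da db)⁻¹ +
        x • ((Umat N r s)ᴴ *
          (Hlin N (Ymat N a b U) w -
            x • (1 : Matrix (Fin N ⊕ Fin N) (Fin N ⊕ Fin N) ℂ))⁻¹ *
          Umat N r s)) ∧
    (Umat N r s)ᴴ *
        (Hlin N (Ymat N (hatEntries N r a da) (hatEntries N s b db) U) w -
          x • (1 : Matrix (Fin N ⊕ Fin N) (Fin N ⊕ Fin N) ℂ))⁻¹ *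
        Umat N r s =
      x⁻¹ • (Emat N r s hr hs da db *
        ((Dmat N r s hr hs da db)⁻¹ -
          (Dmat N r s hr hs da db)⁻¹ *
            ((Dmat N r s hr hs da db)⁻¹ +
              x • ((Umat N r s)ᴴ *
                (Hlin N (Ymat N a b U) w -
                  x • (1 : Matrix (Fin N ⊕ Fin N) (Fin N ⊕ Fin N) ℂ))⁻¹ *
                Umat N r s))⁻¹ *
            (Dmat N r s hr hs da db)⁻¹) *
        Emat N r s hr hs da db) := by
  have haw : ∀ i, (0:ℝ) ≤ a i := fun i => (ha i).le
  have hbw : ∀ i, (0:ℝ) ≤ b i := fun i => (hb i).le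
  have hdaw : ∀ i : Fin N, (i:ℕ) < r → 0 ≤ da i := fun i h => (hda i h).le
  have hdbw : ∀ j : Fin N, (j:ℕ) < s → 0 ≤ db j := fun j h => (hdb j h).le
  have hM : IsUnit (Hlin N (Ymat N a b U) w -
      x • (1 : Matrix (Fin N ⊕ Fin N) (Fin N ⊕ Fin N) ℂ)) :=
    hlin_isUnit N _ x w hx hw hev
  have hMh : IsUnit (Hlin N (Ymat N (hatEntries N r a da) (hatEntries N s b db) U) w -
      x • (1 : Matrix (Fin N ⊕ Fin N) (Fin N ⊕ Fin N) ℂ)) :=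
    hlin_isUnit N _ x w hx hw hev'
  have hstruct := structural N r s hr hs a b da db haw hbw hdaw hdbw U x w
  have hP := pmat_isUnit N r s da db hdaw hdbw
  have hNn : IsUnit ((Hlin N (Ymat N a b U) w -
      x • (1 : Matrix (Fin N ⊕ Fin N) (Fin N ⊕ Fin N) ℂ)) +
      x • (Umat N r s * Dmat N r s hr hs da db * (Umat N r s)ᴴ)) := by
    have h1 : IsUnit (Pmat N r s da db * ((Hlin N (Ymat N a b U) w - x • 1) +
        x • (Umat N r s * Dmat N r s hr hs da db * (Umat N r s)ᴴ)) * Pmat N r s da db) :=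
      hstruct ▸ hMh
    rw [Matrix.isUnit_iff_isUnit_det, Matrix.det_mul, Matrix.det_mul] at h1
    rw [Matrix.isUnit_iff_isUnit_det]
    exact isUnit_of_mul_isUnit_right (isUnit_of_mul_isUnit_left h1)
  have hD : IsUnit (Dmat N r s hr hs da db) := by
    rw [Dmat, Matrix.isUnit_diagonal]
    have hvz : ∀ k, (Sum.elim
        (fun i : Fin r =>
          ((da (Fin.castLE hr i) / (1 + da (Fin.castLE hr i)) : ℝ) : ℂ))
        (fun j : Fin s =>
          ((db (Fin.castLE hs j) / (1 + db (Fin.castLE hs j)) : ℝ) : ℂ))) k ≠ 0 := by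
      intro k
      cases k with
      | inl i =>
        have h1 := hda (Fin.castLE hr i) (by simpa using i.isLt)
        have h2 : (0:ℝ) < 1 + da (Fin.castLE hr i) := by linarith
        simp only [Sum.elim_inl, ne_eq, Complex.ofReal_eq_zero]
        exact (div_pos h1 h2).ne'
      | inr j =>
        have h1 := hdb (Fin.castLE hs j) (by simpa using j.isLt)
        have h2 : (0:ℝ) < 1 + db (Fin.castLE hs j) := by linarith
        simp only [Sum.elim_inr, ne_eq, Complex.ofReal_eq_zero]
        exact (div_pos h1 h2).ne'
    exact IsUnit.of_mul_eq_one _ (funext fun k => mul_inv_cancel₀ (hvz k))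
  have hKK' := key_inv
    (Hlin N (Ymat N a b U) w - x • (1 : Matrix (Fin N ⊕ Fin N) (Fin N ⊕ Fin N) ℂ))
    ((Hlin N (Ymat N a b U) w - x • (1 : Matrix (Fin N ⊕ Fin N) (Fin N ⊕ Fin N) ℂ)) +
      x • (Umat N r s * Dmat N r s hr hs da db * (Umat N r s)ᴴ))
    (Umat N r s) (Dmat N r s hr hs da db) x hM hNn hD rfl
  have hKunit : IsUnit ((Dmat N r s hr hs da db)⁻¹ +
      x • ((Umat N r s)ᴴ *
        (Hlin N (Ymat N a b U) w -
          x • (1 : Matrix (Fin N ⊕ Fin N) (Fin N ⊕ Fin N) ℂ))⁻¹ *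
        Umat N r s)) := matrix_isUnit_of_mul_eq_one hKK'
  refine ⟨hMh, hKunit, ?_⟩
  have hKinv := Matrix.inv_eq_right_inv hKK'
  have hDdet := (Matrix.isUnit_iff_isUnit_det (Dmat N r s hr hs da db)).mp hD
  have hDD : (Dmat N r s hr hs da db)⁻¹ * Dmat N r s hr hs da db = 1 :=
    Matrix.nonsing_inv_mul _ hDdet
  have hDDr : Dmat N r s hr hs da db * (Dmat N r s hr hs da db)⁻¹ = 1 :=
    Matrix.mul_nonsing_inv _ hDdet
  set W := (Umat N r s)ᴴ *
      ((Hlin N (Ymat N a b U) w - x • (1 : Matrix (Fin N ⊕ Fin N) (Fin N ⊕ Fin N) ℂ)) +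
        x • (Umat N r s * Dmat N r s hr hs da db * (Umat N r s)ᴴ))⁻¹ * Umat N r s with hW
  have hmid : (Dmat N r s hr hs da db)⁻¹ -
      (Dmat N r s hr hs da db)⁻¹ *
        ((Dmat N r s hr hs da db)⁻¹ +
          x • ((Umat N r s)ᴴ *
            (Hlin N (Ymat N a b U) w -
              x • (1 : Matrix (Fin N ⊕ Fin N) (Fin N ⊕ Fin N) ℂ))⁻¹ *
            Umat N r s))⁻¹ *
        (Dmat N r s hr hs da db)⁻¹ = x • W := by
    rw [hKinv]
    have e1 : (Dmat N r s hr hs da db)⁻¹ *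
        (Dmat N r s hr hs da db - x • (Dmat N r s hr hs da db * W * Dmat N r s hr hs da db))
        = 1 - x • (W * Dmat N r s hr hs da db) := by
      rw [Matrix.mul_sub, hDD, Matrix.mul_smul,
        Matrix.mul_assoc (Dmat N r s hr hs da db) W (Dmat N r s hr hs da db),
        ← Matrix.mul_assoc ((Dmat N r s hr hs da db)⁻¹) (Dmat N r s hr hs da db)
          (W * Dmat N r s hr hs da db), hDD, Matrix.one_mul]
    rw [e1, Matrix.sub_mul, Matrix.one_mul, Matrix.smul_mul,
      Matrix.mul_assoc W (Dmat N r s hr hs da db) ((Dmat N r s hr hs da db)⁻¹),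
      hDDr, Matrix.mul_one]
    abel
  rw [hmid]
  have hEW : Emat N r s hr hs da db * (x • W) * Emat N r s hr hs da db
      = x • (Emat N r s hr hs da db * W * Emat N r s hr hs da db) := by
    rw [Matrix.mul_smul, Matrix.smul_mul]
  rw [hEW, smul_smul, inv_mul_cancel₀ hx, one_smul, hW]
  have hMhinv : (Hlin N (Ymat N (hatEntries N r a da) (hatEntries N s b db) U) w -
      x • (1 : Matrix (Fin N ⊕ Fin N) (Fin N ⊕ Fin N) ℂ))⁻¹
      = (Pmat N r s da db)⁻¹ *
        ((((Hlin N (Ymat N a b U) w - x • 1) +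
          x • (Umat N r s * Dmat N r s hr hs da db * (Umat N r s)ᴴ))⁻¹) *
          (Pmat N r s da db)⁻¹) := by
    rw [hstruct, Matrix.mul_inv_rev, Matrix.mul_inv_rev]
  rw [hMhinv]
  rw [show (Umat N r s)ᴴ * ((Pmat N r s da db)⁻¹ *
      ((((Hlin N (Ymat N a b U) w - x • 1) +
        x • (Umat N r s * Dmat N r s hr hs da db * (Umat N r s)ᴴ))⁻¹) *
        (Pmat N r s da db)⁻¹))
      = ((Umat N r s)ᴴ * (Pmat N r s da db)⁻¹) *
        (((Hlin N (Ymat N a b U) w - x • 1) +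
          x • (Umat N r s * Dmat N r s hr hs da db * (Umat N r s)ᴴ))⁻¹) *
        (Pmat N r s da db)⁻¹ from by simp only [Matrix.mul_assoc]]
  rw [uH_mul_pinv N r s hr hs da db hdaw hdbw]
  rw [show Emat N r s hr hs da db * (Umat N r s)ᴴ *
      (((Hlin N (Ymat N a b U) w - x • 1) +
        x • (Umat N r s * Dmat N r s hr hs da db * (Umat N r s)ᴴ))⁻¹) *
      (Pmat N r s da db)⁻¹ * Umat N r s
      = Emat N r s hr hs da db * (Umat N r s)ᴴ *
      (((Hlin N (Ymat N a b U) w - x • 1) +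
        x • (Umat N r s * Dmat N r s hr hs da db * (Umat N r s)ᴴ))⁻¹) *
      ((Pmat N r s da db)⁻¹ * Umat N r s) from by simp only [Matrix.mul_assoc]]
  rw [pinv_mul_U N r s hr hs da db hdaw hdbw]
  simp only [Matrix.mul_assoc]
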